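/- Let G and H be connected finite simple graphs of order n₁ ≥ 2 and n₂ ≥ 2, with maximum degrees Δ₁ and Δ₂, respectively. If Δ₁ = n₁ − 1 and Δ₂ = n₂ − 1, then ϖ(G + H) = ϖ(G) + ϖ(H) − 1. -/

import Mathlib

open SimpleGraph

/-- A vertex `w` strongly resolves the pair `u`, `v` if `v` lies on some shortest `u`–`w`
path or `u` lies on some shortest `v`–`w` path. -/
def StronglyResolves {V : Type*} (G : SimpleGraph V) (w u v : V) : Prop :=
  G.dist u w = G.dist u v + G.dist v w ∨ G.dist v w = G.dist v u + G.dist u w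

/-- `S` is a strong resolving set for `G` if every pair of distinct vertices is strongly
resolved by some vertex of `S`. -/
def IsStrongResolvingSet {V : Type*} (G : SimpleGraph V) (S : Set V) : Prop :=
  ∀ u v : V, u ≠ v → ∃ w ∈ S, StronglyResolves G w u v

/-- The strong metric dimension: the minimum cardinality of a strong resolving set. -/
noncomputable def strongDim {V : Type*} (G : SimpleGraph V) [Fintype V] : ℕ :=
  sInf {k | ∃ S : Finset V, IsStrongResolvingSet G ↑S ∧ S.card = k}

/-- The closed neighborhood of a vertex. -/
def closedNbhd {V : Type*} (G : SimpleGraph V) (v : V) : Set V :=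
  insert v (G.neighborSet v)

/-- A twin-free clique: a clique containing no pair of true twins. -/
def IsTwinFreeClique {V : Type*} (G : SimpleGraph V) (X : Finset V) : Prop :=
  G.IsClique ↑X ∧ ∀ u ∈ X, ∀ v ∈ X, u ≠ v → closedNbhd G u ≠ closedNbhd G v

/-- The twin-free clique number: maximum cardinality of a twin-free clique. -/
noncomputable def twinFreeCliqueNum {V : Type*} (G : SimpleGraph V) [Fintype V] : ℕ :=
  sSup {k | ∃ X : Finset V, IsTwinFreeClique G X ∧ X.card = k}

/-- Adjacency relation of the join of two graphs. -/
def joinAdj {V W : Type*} (G : SimpleGraph V) (H : SimpleGraph W) :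
    V ⊕ W → V ⊕ W → Prop
  | Sum.inl a, Sum.inl b => G.Adj a b
  | Sum.inr a, Sum.inr b => H.Adj a b
  | Sum.inl _, Sum.inr _ => True
  | Sum.inr _, Sum.inl _ => True

/-- The join `G + H`: disjoint union of `G` and `H` plus all edges between them. -/
def joinGraph {V W : Type*} (G : SimpleGraph V) (H : SimpleGraph W) :
    SimpleGraph (V ⊕ W) where
  Adj := joinAdj G H
  symm := by
    constructor
    rintro (a | a) (b | b) h
    · exact G.adj_symm h
    · trivial
    · trivial
    · exact H.adj_symm h
  loopless := by
    constructor
    rintro (a | a) h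
    · exact G.loopless.irrefl a h
    · exact H.loopless.irrefl a h

/-- Adjacency relation of the corona product `G ⊙ H`. -/
def coronaAdj {V W : Type*} (G : SimpleGraph V) (H : SimpleGraph W) :
    V ⊕ V × W → V ⊕ V × W → Prop
  | Sum.inl a, Sum.inl b => G.Adj a b
  | Sum.inr p, Sum.inr q => p.1 = q.1 ∧ H.Adj p.2 q.2
  | Sum.inl a, Sum.inr q => a = q.1
  | Sum.inr p, Sum.inl b => p.1 = b

/-- The corona product `G ⊙ H`: one copy of `G` and one copy of `H` for each vertex of
`G`, with the `i`-th vertex of `G` joined to every vertex of the `i`-th copy of `H`. -/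
def corona {V W : Type*} (G : SimpleGraph V) (H : SimpleGraph W) :
    SimpleGraph (V ⊕ V × W) where
  Adj := coronaAdj G H
  symm := by
    constructor
    rintro (a | p) (b | q) h
    · exact G.adj_symm h
    · exact h.symm
    · exact h.symm
    · exact ⟨h.1.symm, H.adj_symm h.2⟩
  loopless := by
    constructor
    rintro (a | p) h
    · exact G.loopless.irrefl a h
    · exact H.loopless.irrefl p.2 h.2

/-- The disjoint union of copies of `H`, one copy for each element of `V`. -/
def copies (V : Type*) {W : Type*} (H : SimpleGraph W) : SimpleGraph (V × W) where
  Adj p q := p.1 = q.1 ∧ H.Adj p.2 q.2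
  symm := ⟨fun _ _ h => ⟨h.1.symm, h.2.symm⟩⟩
  loopless := ⟨fun p h => H.loopless.irrefl p.2 h.2⟩

/-- The algebraic connectivity: the second smallest eigenvalue (with multiplicity,
in nondecreasing order) of the Laplacian matrix. -/
noncomputable def algebraicConnectivity {V : Type*} (G : SimpleGraph V) [Fintype V]
    [DecidableEq V] [DecidableRel G.Adj] : ℝ :=
  (((Finset.univ.val.map ((G.posSemidef_lapMatrix ℝ).isHermitian.eigenvalues)).sort
    (· ≤ ·)).getD 1 0)

section Aux
variable {V W : Type*}

lemma mem_closedNbhd {G : SimpleGraph V} {v x : V} :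
    x ∈ closedNbhd G v ↔ x = v ∨ G.Adj v x := by
  simp [closedNbhd]

lemma closedNbhd_eq_univ_iff {G : SimpleGraph V} {v : V} :
    closedNbhd G v = Set.univ ↔ ∀ w, w ≠ v → G.Adj v w := by
  constructor
  · intro h w hw
    have : w ∈ closedNbhd G v := h ▸ Set.mem_univ w
    rcases mem_closedNbhd.1 this with h' | h'
    · exact absurd h' hw
    · exact h'
  · intro h
    ext x
    simp only [Set.mem_univ, iff_true, mem_closedNbhd]
    by_cases hx : x = v
    · exact Or.inl hx
    · exact Or.inr (h x hx)

lemma exists_universal [Fintype V] (G : SimpleGraph V) [DecidableRel G.Adj]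
    (hn : 1 ≤ Fintype.card V) (hd : G.maxDegree = Fintype.card V - 1) :
    ∃ v, closedNbhd G v = Set.univ := by
  classical
  have : Nonempty V := Fintype.card_pos_iff.mp hn
  obtain ⟨v, hv⟩ := G.exists_maximal_degree_vertex
  refine ⟨v, closedNbhd_eq_univ_iff.2 fun w hw => ?_⟩
  by_contra hadj
  have hsub : G.neighborFinset v ⊆ (Finset.univ.erase v).erase w := by
    intro x hx
    simp only [Finset.mem_erase, Finset.mem_univ, and_true]
    refine ⟨?_, ?_⟩
    · rintro rfl; exact hadj (by simpa using hx)
    · rintro rfl; exact absurd hx (by simp)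
  have hcard := Finset.card_le_card hsub
  have hw' : w ∈ Finset.univ.erase v := by simp [hw]
  rw [Finset.card_erase_of_mem hw', Finset.card_erase_of_mem (Finset.mem_univ v),
    Finset.card_univ] at hcard
  have hdeg : G.degree v = Fintype.card V - 1 := by rw [← hv, hd]
  rw [← SimpleGraph.card_neighborFinset_eq_degree] at hdeg
  rw [hdeg] at hcard
  have h2 : 1 < Fintype.card V := Fintype.one_lt_card_iff.2 ⟨w, v, hw⟩
  omega

variable [Fintype V]

lemma tfcn_bddAbove (G : SimpleGraph V) :
    BddAbove {k | ∃ X : Finset V, IsTwinFreeClique G X ∧ X.card = k} := by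
  refine ⟨Fintype.card V, fun k hk => ?_⟩
  obtain ⟨X, _, rfl⟩ := hk
  exact X.card_le_univ.trans_eq (by simp)

lemma le_tfcn {G : SimpleGraph V} {X : Finset V} (h : IsTwinFreeClique G X) :
    X.card ≤ twinFreeCliqueNum G :=
  le_csSup (tfcn_bddAbove G) ⟨X, h, rfl⟩

lemma tfcn_spec (G : SimpleGraph V) :
    ∃ X : Finset V, IsTwinFreeClique G X ∧ X.card = twinFreeCliqueNum G := by
  have hne : {k | ∃ X : Finset V, IsTwinFreeClique G X ∧ X.card = k}.Nonempty :=
    ⟨0, ∅, ⟨by simp, by simp⟩, rfl⟩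
  exact Nat.sSup_mem hne (tfcn_bddAbove G)

/-- Every maximum twin-free clique contains a universal vertex, if one exists. -/
lemma max_tfc_contains_universal {G : SimpleGraph V} {u : V}
    (hu : closedNbhd G u = Set.univ) {X : Finset V} (hX : IsTwinFreeClique G X)
    (hcard : X.card = twinFreeCliqueNum G) :
    ∃ a ∈ X, closedNbhd G a = Set.univ := by
  classical
  by_contra hno
  push_neg at hno
  have huX : u ∉ X := fun h => hno u h hu
  have hclq : G.IsClique ↑(insert u X) := by
    rw [Finset.coe_insert]
    intro x hx y hy hxy
    rcases hx with rfl | hx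
    · rcases hy with rfl | hy
      · exact absurd rfl hxy
      · exact closedNbhd_eq_univ_iff.1 hu y (fun h => hxy h.symm)
    · rcases hy with rfl | hy
      · exact (closedNbhd_eq_univ_iff.1 hu x (fun h => hxy h)).symm
      · exact hX.1 hx hy hxy
  have htf : IsTwinFreeClique G (insert u X) := by
    refine ⟨hclq, ?_⟩
    intro a ha b hb hab
    rw [Finset.mem_insert] at ha hb
    rcases ha with rfl | ha
    · rcases hb with rfl | hb
      · exact absurd rfl hab
      · rw [hu]; exact fun h => hno b hb h.symm
    · rcases hb with rfl | hb
      · rw [hu]; exact fun h => hno a ha h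
      · exact hX.2 a ha b hb hab
  have := le_tfcn htf
  rw [Finset.card_insert_of_notMem huX, hcard] at this
  omega

end Aux

section Join
variable {V W : Type*} {G : SimpleGraph V} {H : SimpleGraph W}

lemma join_adj_ll {a b : V} : (joinGraph G H).Adj (Sum.inl a) (Sum.inl b) ↔ G.Adj a b :=
  Iff.rfl

lemma join_adj_rr {a b : W} : (joinGraph G H).Adj (Sum.inr a) (Sum.inr b) ↔ H.Adj a b :=
  Iff.rfl

lemma join_adj_lr (a : V) (b : W) : (joinGraph G H).Adj (Sum.inl a) (Sum.inr b) :=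
  trivial

lemma join_adj_rl (a : W) (b : V) : (joinGraph G H).Adj (Sum.inr a) (Sum.inl b) :=
  trivial

lemma mem_jcn_ll {a x : V} :
    Sum.inl x ∈ closedNbhd (joinGraph G H) (Sum.inl a) ↔ x ∈ closedNbhd G a := by
  rw [mem_closedNbhd, mem_closedNbhd, join_adj_ll, Sum.inl.injEq]

lemma mem_jcn_rr {b y : W} :
    Sum.inr y ∈ closedNbhd (joinGraph G H) (Sum.inr b) ↔ y ∈ closedNbhd H b := by
  rw [mem_closedNbhd, mem_closedNbhd, join_adj_rr, Sum.inr.injEq]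

lemma mem_jcn_rl (a : V) (y : W) :
    Sum.inr y ∈ closedNbhd (joinGraph G H) (Sum.inl a) :=
  mem_closedNbhd.2 (Or.inr (join_adj_lr a y))

lemma mem_jcn_lr (b : W) (x : V) :
    Sum.inl x ∈ closedNbhd (joinGraph G H) (Sum.inr b) :=
  mem_closedNbhd.2 (Or.inr (join_adj_rl b x))

lemma jcn_ll_eq {a a' : V} :
    closedNbhd (joinGraph G H) (Sum.inl a) = closedNbhd (joinGraph G H) (Sum.inl a') ↔
      closedNbhd G a = closedNbhd G a' := by
  constructor
  · intro h
    ext x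
    rw [← mem_jcn_ll (H := H), h, mem_jcn_ll]
  · intro h
    ext z
    cases z with
    | inl x => rw [mem_jcn_ll, mem_jcn_ll, h]
    | inr y => simp [mem_jcn_rl]

lemma jcn_rr_eq {b b' : W} :
    closedNbhd (joinGraph G H) (Sum.inr b) = closedNbhd (joinGraph G H) (Sum.inr b') ↔
      closedNbhd H b = closedNbhd H b' := by
  constructor
  · intro h
    ext y
    rw [← mem_jcn_rr (G := G), h, mem_jcn_rr]
  · intro h
    ext z
    cases z with
    | inl x => simp [mem_jcn_lr]
    | inr y => rw [mem_jcn_rr, mem_jcn_rr, h]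

lemma jcn_lr_eq {a : V} {b : W}
    (h : closedNbhd (joinGraph G H) (Sum.inl a) = closedNbhd (joinGraph G H) (Sum.inr b)) :
    closedNbhd G a = Set.univ ∧ closedNbhd H b = Set.univ := by
  constructor
  · ext x
    simp only [Set.mem_univ, iff_true]
    exact mem_jcn_ll.1 (h ▸ mem_jcn_lr b x)
  · ext y
    simp only [Set.mem_univ, iff_true]
    exact mem_jcn_rr.1 (h ▸ mem_jcn_rl a y)

lemma jcn_inl_univ {a : V} (h : closedNbhd G a = Set.univ) :
    closedNbhd (joinGraph G H) (Sum.inl a) = Set.univ := by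
  ext z
  simp only [Set.mem_univ, iff_true]
  cases z with
  | inl x => exact mem_jcn_ll.2 (h ▸ Set.mem_univ x)
  | inr y => exact mem_jcn_rl a y

lemma jcn_inr_univ {b : W} (h : closedNbhd H b = Set.univ) :
    closedNbhd (joinGraph G H) (Sum.inr b) = Set.univ := by
  ext z
  simp only [Set.mem_univ, iff_true]
  cases z with
  | inl x => exact mem_jcn_lr b x
  | inr y => exact mem_jcn_rr.2 (h ▸ Set.mem_univ y)

end Join

/-- If `G`, `H` are connected graphs of order `n₁, n₂ ≥ 2` with maximum
degrees `Δ₁ = n₁ − 1` and `Δ₂ = n₂ − 1`, then `ϖ(G + H) = ϖ(G) + ϖ(H) − 1`. -/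
theorem twinFreeCliqueNum_join_of_dominant {V W : Type*} [Fintype V] [Fintype W]
    (G : SimpleGraph V) (H : SimpleGraph W) [DecidableRel G.Adj] [DecidableRel H.Adj]
    (hG : G.Connected) (hH : H.Connected)
    (hn1 : 2 ≤ Fintype.card V) (hn2 : 2 ≤ Fintype.card W)
    (hd1 : G.maxDegree = Fintype.card V - 1) (hd2 : H.maxDegree = Fintype.card W - 1) :
    twinFreeCliqueNum (joinGraph G H) = twinFreeCliqueNum G + twinFreeCliqueNum H - 1 := by
  classical
  obtain ⟨uG, huG⟩ := exists_universal G (by omega) hd1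
  obtain ⟨uH, huH⟩ := exists_universal H (by omega) hd2
  -- Lower bound
  obtain ⟨A, hA, hAcard⟩ := tfcn_spec G
  obtain ⟨Bf, hB, hBcard⟩ := tfcn_spec H
  obtain ⟨w, hwB, hwuniv⟩ := max_tfc_contains_universal huH hB hBcard
  set B := Bf.erase w with hBdef
  have hBsub : B ⊆ Bf := Finset.erase_subset w Bf
  have hBtf : IsTwinFreeClique H B :=
    ⟨hB.1.subset (Finset.coe_subset.2 hBsub),
      fun u hu v hv => hB.2 u (hBsub hu) v (hBsub hv)⟩
  have hBnouniv : ∀ b ∈ B, closedNbhd H b ≠ Set.univ := by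
    intro b hb hbu
    exact hB.2 b (hBsub hb) w hwB (Finset.ne_of_mem_erase hb) (hbu.trans hwuniv.symm)
  have hBc : B.card = Bf.card - 1 := Finset.card_erase_of_mem hwB
  have hH1 : 1 ≤ twinFreeCliqueNum H := by
    rw [← hBcard]
    exact Finset.card_pos.2 ⟨w, hwB⟩
  -- the candidate clique in the join
  have hYtf : IsTwinFreeClique (joinGraph G H) (A.disjSum B) := by
    constructor
    · intro x hx y hy hne
      rw [Finset.mem_coe, Finset.mem_disjSum] at hx hy
      rcases hx with ⟨a, ha, rfl⟩ | ⟨b, hb, rfl⟩ <;>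
        rcases hy with ⟨a', ha', rfl⟩ | ⟨b', hb', rfl⟩
      · exact join_adj_ll.2 (hA.1 ha ha' (fun h => hne (congrArg Sum.inl h)))
      · exact join_adj_lr _ _
      · exact join_adj_rl _ _
      · exact join_adj_rr.2 (hBtf.1 hb hb' (fun h => hne (congrArg Sum.inr h)))
    · intro x hx y hy hne
      rw [Finset.mem_disjSum] at hx hy
      rcases hx with ⟨a, ha, rfl⟩ | ⟨b, hb, rfl⟩ <;>
        rcases hy with ⟨a', ha', rfl⟩ | ⟨b', hb', rfl⟩
      · intro h
        exact hA.2 a ha a' ha' (fun h' => hne (congrArg Sum.inl h')) (jcn_ll_eq.1 h)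
      · intro h
        exact hBnouniv b' hb' (jcn_lr_eq h).2
      · intro h
        exact hBnouniv b hb (jcn_lr_eq h.symm).2
      · intro h
        exact hBtf.2 b hb b' hb' (fun h' => hne (congrArg Sum.inr h')) (jcn_rr_eq.1 h)
  have hlow : twinFreeCliqueNum G + twinFreeCliqueNum H - 1 ≤
      twinFreeCliqueNum (joinGraph G H) := by
    have := le_tfcn hYtf
    rw [Finset.card_disjSum, hAcard, hBc, hBcard] at this
    omega
  -- Upper bound
  obtain ⟨Y, hY, hYcard⟩ := tfcn_spec (joinGraph G H)
  have hAtf : IsTwinFreeClique G Y.toLeft := by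
    constructor
    · intro a ha a' ha' hne
      have := hY.1 (Finset.mem_coe.2 (Finset.mem_toLeft.1 ha))
        (Finset.mem_coe.2 (Finset.mem_toLeft.1 ha'))
        (fun h => hne (Sum.inl.injEq a a' ▸ h : a = a'))
      exact join_adj_ll.1 this
    · intro a ha a' ha' hne h
      exact hY.2 (Sum.inl a) (Finset.mem_toLeft.1 ha) (Sum.inl a')
        (Finset.mem_toLeft.1 ha') (fun h' => hne (Sum.inl.injEq a a' ▸ h'))
        (jcn_ll_eq.2 h)
  have hBtf' : IsTwinFreeClique H Y.toRight := by
    constructor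
    · intro b hb b' hb' hne
      have := hY.1 (Finset.mem_coe.2 (Finset.mem_toRight.1 hb))
        (Finset.mem_coe.2 (Finset.mem_toRight.1 hb'))
        (fun h => hne (Sum.inr.injEq b b' ▸ h : b = b'))
      exact join_adj_rr.1 this
    · intro b hb b' hb' hne h
      exact hY.2 (Sum.inr b) (Finset.mem_toRight.1 hb) (Sum.inr b')
        (Finset.mem_toRight.1 hb') (fun h' => hne (Sum.inr.injEq b b' ▸ h'))
        (jcn_rr_eq.2 h)
  have hAle : Y.toLeft.card ≤ twinFreeCliqueNum G := le_tfcn hAtf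
  have hBle : Y.toRight.card ≤ twinFreeCliqueNum H := le_tfcn hBtf'
  have hnotboth : ¬(Y.toLeft.card = twinFreeCliqueNum G ∧
      Y.toRight.card = twinFreeCliqueNum H) := by
    rintro ⟨h1, h2⟩
    obtain ⟨aU, haU, haUu⟩ := max_tfc_contains_universal huG hAtf h1
    obtain ⟨bU, hbU, hbUu⟩ := max_tfc_contains_universal huH hBtf' h2
    exact hY.2 (Sum.inl aU) (Finset.mem_toLeft.1 haU) (Sum.inr bU)
      (Finset.mem_toRight.1 hbU) (by simp)
      ((jcn_inl_univ haUu).trans (jcn_inr_univ hbUu).symm)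
  have hsum := Finset.card_toLeft_add_card_toRight (u := Y)
  omega
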